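/- One step of RPCholesky at most doubles the low-rank approximation error: for a psd matrix A with tr(A) > 0 and any k ≥ 1, the expectation over the pivot s ∼ diag(A)/tr(A) of tr((A⁽¹⁾) - ⟦A⁽¹⁾⟧_{k-1}) is at most (1 + (λ₁(A)+λ_k(A))/tr(A)) · tr(A - ⟦A⟧_k), where A⁽¹⁾ = A - A(:,s)A(s,:)/a_{ss} is the residual. -/

import Mathlib

open Matrix

/-- Sum of the `r` largest eigenvalues (Ky Fan): the supremum over size-`r` index sets of the
sum of the corresponding eigenvalues (listed with multiplicity). Junk value for
non-Hermitian matrices. -/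
noncomputable def sumTopEig {N : ℕ} (A : Matrix (Fin N) (Fin N) ℝ) (r : ℕ) : ℝ :=
  if hA : A.IsHermitian then
    ⨆ s : {s : Finset (Fin N) // s.card = r}, ∑ i ∈ s.1, hA.eigenvalues i
  else 0

/-- `tr(M - ⟦M⟧_r)`: the sum of all eigenvalues of `M` beyond the `r` largest. -/
noncomputable def tailSum {N : ℕ} (A : Matrix (Fin N) (Fin N) ℝ) (r : ℕ) : ℝ :=
  A.trace - sumTopEig A r


section RPCholeskyAux
variable {N : ℕ}


lemma exists_orthodiag {N : ℕ} (M : Matrix (Fin N) (Fin N) ℝ) (hM : M.IsHermitian) :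
    ∃ u : Fin N → Fin N → ℝ,
      (∀ j l, ∑ i, u i j * u i l = if j = l then (1:ℝ) else 0) ∧
      (∀ i i', ∑ j, u i j * u i' j = if i = i' then (1:ℝ) else 0) ∧
      (∀ j l, M j l = ∑ i, hM.eigenvalues i * u i j * u i l) := by
  set U : Matrix (Fin N) (Fin N) ℝ := (hM.eigenvectorUnitary : Matrix (Fin N) (Fin N) ℝ) with hU
  have hU1 : U * star U = 1 := (Matrix.mem_unitaryGroup_iff).mp hM.eigenvectorUnitary.2
  have hU2 : star U * U = 1 := (Matrix.mem_unitaryGroup_iff').mp hM.eigenvectorUnitary.2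
  refine ⟨fun i j => U j i, ?_, ?_, ?_⟩
  · intro j l
    have := congrFun (congrFun hU1 j) l
    simpa [Matrix.mul_apply, Matrix.one_apply, star_apply, mul_comm] using this
  · intro i i'
    have := congrFun (congrFun hU2 i) i'
    simpa [Matrix.mul_apply, Matrix.one_apply, star_apply, mul_comm] using this
  · intro j l
    have := congrFun (congrFun hM.spectral_theorem j) l
    rw [this, Unitary.conjStarAlgAut_apply]
    rw [Matrix.mul_apply]
    refine Finset.sum_congr rfl fun i _ => ?_
    rw [Matrix.mul_apply]
    rw [Finset.sum_eq_single i]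
    · simp only [Matrix.diagonal_apply_eq, star_apply, hU,
        Matrix.IsHermitian.eigenvectorUnitary_apply, Function.comp_apply, RCLike.ofReal_real_eq_id,
        id_eq, star_trivial]
      ring
    · intro b _ hb
      simp [Matrix.diagonal_apply, hb]
    · simp


lemma nonempty_cardsets {N r : ℕ} (hr : r ≤ N) : Nonempty {s : Finset (Fin N) // s.card = r} := by
  obtain ⟨t, -, ht⟩ := Finset.exists_subset_card_eq (s := (Finset.univ : Finset (Fin N))) (n := r)
    (by simpa using hr)
  exact ⟨⟨t, ht⟩⟩

lemma le_sumTopEig {N : ℕ} {A : Matrix (Fin N) (Fin N) ℝ} (hA : A.IsHermitian) {r : ℕ}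
    (S : Finset (Fin N)) (hS : S.card = r) :
    ∑ i ∈ S, hA.eigenvalues i ≤ sumTopEig A r := by
  rw [sumTopEig, dif_pos hA]
  exact le_ciSup (f := fun s : {s : Finset (Fin N) // s.card = r} => ∑ i ∈ s.1, hA.eigenvalues i)
    (Set.Finite.bddAbove (Set.finite_range _)) ⟨S, hS⟩

lemma sumTopEig_le {N : ℕ} {A : Matrix (Fin N) (Fin N) ℝ} (hA : A.IsHermitian) {r : ℕ}
    (hr : r ≤ N) {b : ℝ} (h : ∀ S : Finset (Fin N), S.card = r → ∑ i ∈ S, hA.eigenvalues i ≤ b) :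
    sumTopEig A r ≤ b := by
  rw [sumTopEig, dif_pos hA]
  have := nonempty_cardsets (N := N) hr
  exact ciSup_le fun s => h s.1 s.2

lemma sumTopEig_attained {N : ℕ} {A : Matrix (Fin N) (Fin N) ℝ} (hA : A.IsHermitian) {r : ℕ}
    (hr : r ≤ N) :
    ∃ S : Finset (Fin N), S.card = r ∧ sumTopEig A r = ∑ i ∈ S, hA.eigenvalues i := by
  have hne := nonempty_cardsets (N := N) (r := r) hr
  obtain ⟨s₀⟩ := hne
  obtain ⟨S, -, hmax⟩ := Finset.exists_max_image (Finset.univ : Finset {s : Finset (Fin N) // s.card = r})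
    (fun s => ∑ i ∈ s.1, hA.eigenvalues i) ⟨s₀, Finset.mem_univ _⟩
  refine ⟨S.1, S.2, le_antisymm (sumTopEig_le hA hr fun S' hS' => hmax ⟨S', hS'⟩ (Finset.mem_univ _))
    (le_sumTopEig hA S.1 S.2)⟩

lemma kyFan {M Q : Matrix (Fin N) (Fin N) ℝ} (hM : M.IsHermitian) {r : ℕ} (hr : r ≤ N)
    (hQ : Q.PosSemidef) (hQ1 : ((1 : Matrix (Fin N) (Fin N) ℝ) - Q).PosSemidef)
    (htrQ : Q.trace = (r : ℝ)) :
    (Q * M).trace ≤ sumTopEig M r := by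
  obtain ⟨u, hcol, hrow, hMentry⟩ := exists_orthodiag M hM
  set μ := hM.eigenvalues with hμ
  set t : Fin N → ℝ := fun i => ∑ j, ∑ l, u i j * Q j l * u i l with ht
  have ht0 : ∀ i, 0 ≤ t i := by
    intro i
    have := hQ.dotProduct_mulVec_nonneg (u i)
    simpa [dotProduct, Matrix.mulVec, ht, Finset.mul_sum, mul_assoc] using this
  have ht1 : ∀ i, t i ≤ 1 := by
    intro i
    have h : (0:ℝ) ≤ (u i) ⬝ᵥ (((1 : Matrix (Fin N) (Fin N) ℝ) - Q) *ᵥ u i) := by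
      simpa using hQ1.dotProduct_mulVec_nonneg (u i)
    have hdot : (u i) ⬝ᵥ (((1 : Matrix (Fin N) (Fin N) ℝ) - Q) *ᵥ u i)
        = (∑ j, u i j * u i j) - t i := by
      rw [Matrix.sub_mulVec, dotProduct_sub, Matrix.one_mulVec]
      congr 1
      simp [dotProduct, Matrix.mulVec, ht, Finset.mul_sum, mul_assoc]
    rw [hdot, hrow i i] at h
    simp only [if_true, eq_self_iff_true] at h
    linarith
  have htsum : ∑ i, t i = (r : ℝ) := by
    rw [← htrQ]
    have : ∑ i, t i = ∑ j, ∑ l, Q j l * (∑ i, u i j * u i l) := by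
      rw [ht]
      rw [Finset.sum_comm]
      refine Finset.sum_congr rfl fun j _ => ?_
      rw [Finset.sum_comm]
      refine Finset.sum_congr rfl fun l _ => ?_
      rw [Finset.mul_sum]
      refine Finset.sum_congr rfl fun i _ => by ring
    rw [this]
    rw [Matrix.trace]
    refine Finset.sum_congr rfl fun j _ => ?_
    rw [Finset.sum_eq_single j]
    · rw [hcol j j]; simp
    · intro l _ hl; rw [hcol j l]; simp [hl.symm]
    · simp
  have htrQM : (Q * M).trace = ∑ i, μ i * t i := by
    have : (Q * M).trace = ∑ j, ∑ l, Q j l * M l j := by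
      simp [Matrix.trace, Matrix.mul_apply, Matrix.diag]
    rw [this]
    have : ∀ j l, Q j l * M l j = ∑ i, μ i * (u i j * Q j l * u i l) := by
      intro j l
      rw [hMentry l j, Finset.mul_sum]
      refine Finset.sum_congr rfl fun i _ => by ring
    simp_rw [this]
    calc ∑ j, ∑ l, ∑ i, μ i * (u i j * Q j l * u i l)
        = ∑ j, ∑ i, ∑ l, μ i * (u i j * Q j l * u i l) :=
          Finset.sum_congr rfl fun j _ => Finset.sum_comm
      _ = ∑ i, ∑ j, ∑ l, μ i * (u i j * Q j l * u i l) := Finset.sum_comm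
      _ = ∑ i, μ i * t i := by
          refine Finset.sum_congr rfl fun i _ => ?_
          rw [ht]
          simp only [Finset.mul_sum]
          try exact Finset.sum_congr rfl fun j _ => Finset.sum_congr rfl fun l _ => by ring
  rw [htrQM]
  obtain ⟨S, hScard, hSval⟩ := sumTopEig_attained hM hr
  have hSmax : ∀ S' : Finset (Fin N), S'.card = r → ∑ i ∈ S', μ i ≤ ∑ i ∈ S, μ i := by
    intro S' hS'
    rw [← hSval]
    exact le_sumTopEig hM S' hS'
  rcases Nat.eq_zero_or_pos r with hr0 | hrpos
  · subst hr0
    have hall : ∀ i, t i = 0 := by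
      intro i
      have h := (Finset.sum_eq_zero_iff_of_nonneg (fun i _ => ht0 i)).mp (by simpa using htsum)
      exact h i (Finset.mem_univ i)
    have : ∑ i, μ i * t i = 0 := Finset.sum_eq_zero fun i _ => by rw [hall i, mul_zero]
    rw [this]
    simpa using le_sumTopEig hM (∅ : Finset (Fin N)) (by simp)
  · -- r ≥ 1 : S nonempty, min argument
    have hSne : S.Nonempty := Finset.card_pos.mp (hScard ▸ hrpos)
    obtain ⟨im, him, hmin⟩ := Finset.exists_min_image S μ hSne
    set m := μ im with hm
    have hswap : ∀ i' ∉ S, μ i' ≤ m := by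
      intro i' hi'
      have hcard : (insert i' (S.erase im)).card = r := by
        rw [Finset.card_insert_of_notMem (fun h => hi' (Finset.mem_of_mem_erase h)),
          Finset.card_erase_of_mem him, hScard]
        omega
      have := hSmax _ hcard
      rw [Finset.sum_insert (fun h => hi' (Finset.mem_of_mem_erase h)),
        Finset.sum_erase_eq_sub him] at this
      linarith
    have key : ∑ i, μ i * t i ≤ ∑ i ∈ S, μ i := by
      have h1 : ∑ i ∈ S, (μ i * t i - μ i) ≤ ∑ i ∈ S, m * (t i - 1) := by
        refine Finset.sum_le_sum fun i hi => ?_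
        have h := hmin i hi
        have h2 := ht1 i
        nlinarith
      have h2 : ∑ i ∈ Sᶜ, μ i * t i ≤ ∑ i ∈ Sᶜ, m * t i := by
        refine Finset.sum_le_sum fun i hi => ?_
        have := hswap i (Finset.mem_compl.mp hi)
        have := ht0 i
        nlinarith
      have hsplit : ∑ i, μ i * t i = ∑ i ∈ S, μ i * t i + ∑ i ∈ Sᶜ, μ i * t i :=
        (Finset.sum_add_sum_compl S _).symm
      have htsplit : ∑ i ∈ S, t i + ∑ i ∈ Sᶜ, t i = (r : ℝ) := by
        rw [Finset.sum_add_sum_compl]; exact htsum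
      have hcount : ∑ i ∈ S, m * (t i - 1) + ∑ i ∈ Sᶜ, m * t i = 0 := by
        rw [← Finset.mul_sum, ← Finset.mul_sum, Finset.sum_sub_distrib]
        simp only [Finset.sum_const, nsmul_eq_mul, mul_one, hScard]
        have h3 : ∑ i ∈ S, t i - (r : ℝ) + ∑ i ∈ Sᶜ, t i = 0 := by linarith
        linear_combination m * h3
      have := Finset.sum_sub_distrib (s := S) (f := fun i => μ i * t i) (g := μ)
      linarith [h1, h2]
    calc ∑ i, μ i * t i ≤ ∑ i ∈ S, μ i := key
      _ ≤ sumTopEig M r := le_sumTopEig hM S hScard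


/-- orthonormal-expansion contraction -/
lemma horth {u : Fin N → Fin N → ℝ}
    (hrow : ∀ i i', ∑ j, u i j * u i' j = if i = i' then (1:ℝ) else 0)
    (I I' : Finset (Fin N)) (f g : Fin N → ℝ) :
    ∑ j, (∑ i ∈ I, f i * u i j) * (∑ i' ∈ I', g i' * u i' j)
      = ∑ i ∈ I ∩ I', f i * g i := by
  calc ∑ j, (∑ i ∈ I, f i * u i j) * (∑ i' ∈ I', g i' * u i' j)
      = ∑ j, ∑ i ∈ I, ∑ i' ∈ I', f i * g i' * (u i j * u i' j) := by
        refine Finset.sum_congr rfl fun j _ => ?_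
        rw [Finset.sum_mul_sum]
        exact Finset.sum_congr rfl fun i _ => Finset.sum_congr rfl fun i' _ => by ring
    _ = ∑ i ∈ I, ∑ i' ∈ I', f i * g i' * (∑ j, u i j * u i' j) := by
        rw [Finset.sum_comm]
        refine Finset.sum_congr rfl fun i _ => ?_
        rw [Finset.sum_comm]
        exact Finset.sum_congr rfl fun i' _ => (Finset.mul_sum _ _ _).symm
    _ = ∑ i ∈ I, ∑ i' ∈ I', if i = i' then f i * g i' else 0 := by
        refine Finset.sum_congr rfl fun i _ => Finset.sum_congr rfl fun i' _ => ?_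
        rw [hrow i i']
        split_ifs <;> simp
    _ = ∑ i ∈ I, if i ∈ I' then f i * g i else 0 := by
        refine Finset.sum_congr rfl fun i _ => ?_
        rw [Finset.sum_ite_eq]
    _ = ∑ i ∈ I ∩ I', f i * g i := by
        rw [Finset.sum_ite_mem]

/-- Bessel / Parseval -/
lemma hbessel {u : Fin N → Fin N → ℝ}
    (hcol : ∀ j l, ∑ i, u i j * u i l = if j = l then (1:ℝ) else 0)
    (x : Fin N → ℝ) :
    ∑ i, (∑ j, u i j * x j) * (∑ j, u i j * x j) = ∑ j, x j * x j := by
  have h := horth (u := fun j i => u i j)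
    (fun j l => by simpa using hcol j l) Finset.univ Finset.univ x x
  simp only [Finset.univ_inter] at h
  calc ∑ i, (∑ j, u i j * x j) * (∑ j, u i j * x j)
      = ∑ i, (∑ j, x j * u i j) * (∑ j, x j * u i j) := by
        refine Finset.sum_congr rfl fun i _ => ?_
        congr 1 <;> exact Finset.sum_congr rfl fun j _ => by ring
    _ = ∑ j, x j * x j := h

section coeff
variable (u : Fin N → Fin N → ℝ) (S : Finset (Fin N)) (q : Fin N → Fin N → ℝ)

noncomputable def coeffM : Matrix (Fin N) (Fin N) ℝ :=
  Matrix.of fun j l => ∑ i ∈ S, ∑ i' ∈ S, q i i' * u i j * u i' l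

lemma coeffM_isHermitian (hq : ∀ i i', q i i' = q i' i) : (coeffM u S q).IsHermitian := by
  refine Matrix.IsHermitian.ext fun j l => ?_
  simp only [coeffM, Matrix.of_apply, star_trivial]
  rw [Finset.sum_comm]
  exact Finset.sum_congr rfl fun i' _ => Finset.sum_congr rfl fun i _ => by rw [hq i i']; ring

lemma coeffM_dotProduct (x : Fin N → ℝ) :
    x ⬝ᵥ (coeffM u S q *ᵥ x)
      = ∑ i ∈ S, ∑ i' ∈ S, q i i' * (∑ j, u i j * x j) * (∑ j, u i' j * x j) := by
  simp only [coeffM, dotProduct, mulVec, Matrix.of_apply]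
  calc ∑ j, x j * ∑ l, (∑ i ∈ S, ∑ i' ∈ S, q i i' * u i j * u i' l) * x l
      = ∑ j, ∑ l, ∑ i ∈ S, ∑ i' ∈ S, q i i' * u i j * (u i' l * x l) * x j := by
        refine Finset.sum_congr rfl fun j _ => ?_
        rw [Finset.mul_sum]
        refine Finset.sum_congr rfl fun l _ => ?_
        rw [Finset.sum_mul, Finset.mul_sum]
        refine Finset.sum_congr rfl fun i _ => ?_
        rw [Finset.sum_mul, Finset.mul_sum]
        exact Finset.sum_congr rfl fun i' _ => by ring
    _ = ∑ j, ∑ i ∈ S, ∑ l, ∑ i' ∈ S, q i i' * u i j * (u i' l * x l) * x j :=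
        Finset.sum_congr rfl fun j _ => Finset.sum_comm
    _ = ∑ i ∈ S, ∑ j, ∑ l, ∑ i' ∈ S, q i i' * u i j * (u i' l * x l) * x j :=
        Finset.sum_comm
    _ = ∑ i ∈ S, ∑ j, ∑ i' ∈ S, ∑ l, q i i' * u i j * (u i' l * x l) * x j :=
        Finset.sum_congr rfl fun i _ => Finset.sum_congr rfl fun j _ => Finset.sum_comm
    _ = ∑ i ∈ S, ∑ i' ∈ S, ∑ j, ∑ l, q i i' * u i j * (u i' l * x l) * x j :=
        Finset.sum_congr rfl fun i _ => Finset.sum_comm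
    _ = ∑ i ∈ S, ∑ i' ∈ S, q i i' * (∑ j, u i j * x j) * (∑ j, u i' j * x j) := by
        refine Finset.sum_congr rfl fun i _ => Finset.sum_congr rfl fun i' _ => ?_
        have h1 : ∀ j, ∑ l, q i i' * u i j * (u i' l * x l) * x j
            = (q i i' * u i j * x j) * ∑ l, u i' l * x l := fun j => by
          rw [Finset.mul_sum]
          exact Finset.sum_congr rfl fun l _ => by ring
        simp_rw [h1]
        rw [← Finset.sum_mul]
        have h2 : ∑ j, q i i' * u i j * x j = q i i' * ∑ j, u i j * x j := by
          rw [Finset.mul_sum]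
          exact Finset.sum_congr rfl fun j _ => by ring
        rw [h2]

lemma coeffM_trace {u : Fin N → Fin N → ℝ}
    (hrow : ∀ i i', ∑ j, u i j * u i' j = if i = i' then (1:ℝ) else 0)
    (S : Finset (Fin N)) (q : Fin N → Fin N → ℝ) :
    (coeffM u S q).trace = ∑ i ∈ S, q i i := by
  simp only [Matrix.trace, Matrix.diag, coeffM, Matrix.of_apply]
  rw [Finset.sum_comm]
  have h1 : ∀ i, ∑ j, ∑ i' ∈ S, q i i' * u i j * u i' j
      = ∑ i' ∈ S, q i i' * ∑ j, u i j * u i' j := by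
    intro i
    rw [Finset.sum_comm]
    refine Finset.sum_congr rfl fun i' _ => ?_
    rw [Finset.mul_sum]
    exact Finset.sum_congr rfl fun j _ => by ring
  refine Finset.sum_congr rfl fun i hi => ?_
  rw [h1]
  have h2 : ∀ i' ∈ S, q i i' * ∑ j, u i j * u i' j = if i = i' then q i i' else 0 := by
    intro i' _
    rw [hrow i i']
    split_ifs <;> simp
  rw [Finset.sum_congr rfl h2, Finset.sum_ite_eq, if_pos hi]

lemma coeffM_trace_mul {u : Fin N → Fin N → ℝ}
    (hrow : ∀ i i', ∑ j, u i j * u i' j = if i = i' then (1:ℝ) else 0)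
    (S : Finset (Fin N)) (q : Fin N → Fin N → ℝ)
    (m : Fin N → Fin N → ℝ) (B : Matrix (Fin N) (Fin N) ℝ)
    (hB : ∀ l j, B l j = ∑ i'', ∑ i''', m i'' i''' * u i'' l * u i''' j) :
    (coeffM u S q * B).trace = ∑ i ∈ S, ∑ i' ∈ S, q i i' * m i' i := by
  have hQform : ∀ j l, coeffM u S q j l
      = ∑ i' ∈ S, (∑ i ∈ S, q i i' * u i j) * u i' l := by
    intro j l
    simp only [coeffM, Matrix.of_apply]
    rw [Finset.sum_comm]
    refine Finset.sum_congr rfl fun i' _ => ?_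
    rw [Finset.sum_mul]
  have hBform : ∀ l j, B l j = ∑ i'', (∑ i''', m i'' i''' * u i''' j) * u i'' l := by
    intro l j
    rw [hB l j]
    refine Finset.sum_congr rfl fun i'' _ => ?_
    rw [Finset.sum_mul]
    exact Finset.sum_congr rfl fun i''' _ => by ring
  have step1 : (coeffM u S q * B).trace
      = ∑ j, ∑ i' ∈ S, (∑ i ∈ S, q i i' * u i j) * (∑ i''', m i' i''' * u i''' j) := by
    simp only [Matrix.trace, Matrix.diag, Matrix.mul_apply]
    refine Finset.sum_congr rfl fun j _ => ?_
    have : ∀ l, coeffM u S q j l * B l j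
        = (∑ i' ∈ S, (∑ i ∈ S, q i i' * u i j) * u i' l)
          * (∑ i'', (∑ i''', m i'' i''' * u i''' j) * u i'' l) := fun l => by
      rw [hQform j l, hBform l j]
    simp_rw [this]
    have h := horth hrow S Finset.univ
      (fun i' => ∑ i ∈ S, q i i' * u i j) (fun i'' => ∑ i''', m i'' i''' * u i''' j)
    rw [Finset.inter_univ] at h
    exact h
  rw [step1]
  calc ∑ j, ∑ i' ∈ S, (∑ i ∈ S, q i i' * u i j) * (∑ i''', m i' i''' * u i''' j)
      = ∑ i' ∈ S, ∑ j, (∑ i ∈ S, q i i' * u i j) * (∑ i''', m i' i''' * u i''' j) :=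
        Finset.sum_comm
    _ = ∑ i' ∈ S, ∑ i ∈ S, q i i' * m i' i := by
        refine Finset.sum_congr rfl fun i' _ => ?_
        have h := horth hrow S Finset.univ (fun i => q i i') (fun i''' => m i' i''')
        rw [Finset.inter_univ] at h
        exact h
    _ = ∑ i ∈ S, ∑ i' ∈ S, q i i' * m i' i := Finset.sum_comm
end coeff

lemma sum_delta_mul (S : Finset (Fin N)) (X : Fin N → Fin N → ℝ) :
    ∑ i ∈ S, ∑ i' ∈ S, (if i = i' then (1:ℝ) else 0) * X i i' = ∑ i ∈ S, X i i := by
  refine Finset.sum_congr rfl fun i hi => ?_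
  have h : ∀ i' ∈ S, (if i = i' then (1:ℝ) else 0) * X i i' = if i = i' then X i i' else 0 := by
    intro i' _
    split_ifs <;> simp
  rw [Finset.sum_congr rfl h, Finset.sum_ite_eq, if_pos hi]

end RPCholeskyAux


set_option maxHeartbeats 2000000 in
/-- One step of RPCholesky at most doubles the low-rank approximation error. -/
theorem rpcholesky_error_doubling_step {N k : ℕ} (hk : 1 ≤ k) (hkN : k ≤ N)
    (A : Matrix (Fin N) (Fin N) ℝ) (hA : A.PosSemidef) (htr : 0 < A.trace) :
    ∑ s ∈ Finset.univ.filter (fun s => 0 < A s s),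
        (A s s / A.trace) *
          tailSum (A - (A s s)⁻¹ • Matrix.vecMulVec (fun i => A i s) (A s)) (k - 1)
      ≤ (1 + (sumTopEig A 1 + (sumTopEig A k - sumTopEig A (k - 1))) / A.trace) *
          tailSum A k := by
  have hH : A.IsHermitian := hA.1
  obtain ⟨u, hcol, hrow, hAe⟩ := exists_orthodiag A hH
  set μ : Fin N → ℝ := hH.eigenvalues with hμdef
  have hμ0 : ∀ i, 0 ≤ μ i := fun i => hA.eigenvalues_nonneg i
  have htrA : A.trace = ∑ i, μ i := by
    have h1 : A.trace = ∑ s, A s s := rfl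
    rw [h1]
    calc ∑ s, A s s = ∑ s, ∑ i, μ i * u i s * u i s :=
          Finset.sum_congr rfl fun s _ => hAe s s
      _ = ∑ i, ∑ s, μ i * u i s * u i s := Finset.sum_comm
      _ = ∑ i, μ i := by
          refine Finset.sum_congr rfl fun i _ => ?_
          have : ∑ s, μ i * u i s * u i s = μ i * ∑ s, u i s * u i s := by
            rw [Finset.mul_sum]
            exact Finset.sum_congr rfl fun s _ => by ring
          rw [this, hrow i i]
          simp
  set lam1 : ℝ := sumTopEig A 1 with hlam1def
  have hμlam1 : ∀ i, μ i ≤ lam1 := fun i => by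
    have h := le_sumTopEig hH {i} (Finset.card_singleton i)
    simpa using h
  have hN1 : 1 ≤ N := le_trans hk hkN
  have hlam1nn : (0:ℝ) ≤ lam1 := le_trans (hμ0 ⟨0, by omega⟩) (hμlam1 ⟨0, by omega⟩)
  obtain ⟨S₀, hS₀card, hS₀val⟩ := sumTopEig_attained hH hkN
  set T : ℝ := ∑ i ∈ S₀ᶜ, μ i with hTdef
  have hTnn : 0 ≤ T := Finset.sum_nonneg fun i _ => hμ0 i
  have htail : tailSum A k = T := by
    rw [tailSum, hS₀val, htrA, ← Finset.sum_add_sum_compl S₀ μ]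
    ring
  have hmono : sumTopEig A (k-1) ≤ sumTopEig A k := by
    refine sumTopEig_le hH (by omega) fun S hS => ?_
    obtain ⟨i₀, hi₀⟩ : ∃ i₀, i₀ ∉ S := by
      by_contra h
      push_neg at h
      have := Finset.eq_univ_iff_forall.mpr h
      rw [this, Finset.card_univ, Fintype.card_fin] at hS
      omega
    calc ∑ i ∈ S, μ i ≤ ∑ i ∈ insert i₀ S, μ i := by
          rw [Finset.sum_insert hi₀]
          have := hμ0 i₀
          linarith
      _ ≤ sumTopEig A k := le_sumTopEig hH _
          (by rw [Finset.card_insert_of_notMem hi₀, hS]; omega)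
  set τ : Fin N → ℝ := fun s => ∑ i ∈ S₀ᶜ, μ i * (u i s * u i s) with hτdef
  have hτnn : ∀ s, 0 ≤ τ s := fun s =>
    Finset.sum_nonneg fun i _ => mul_nonneg (hμ0 i) (mul_self_nonneg _)
  have hτsum : ∑ s, τ s = T := by
    rw [hτdef, hTdef]
    calc ∑ s, ∑ i ∈ S₀ᶜ, μ i * (u i s * u i s)
        = ∑ i ∈ S₀ᶜ, ∑ s, μ i * (u i s * u i s) := Finset.sum_comm
      _ = ∑ i ∈ S₀ᶜ, μ i := by
          refine Finset.sum_congr rfl fun i _ => ?_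
          rw [← Finset.mul_sum, hrow i i]
          simp
  have hdiagA : ∀ s, A s s = ∑ i, μ i * (u i s * u i s) := fun s => by
    rw [hAe s s]
    exact Finset.sum_congr rfl fun i _ => by ring
  have hdiag_nn : ∀ s, 0 ≤ A s s := fun s => by
    rw [hdiagA s]
    exact Finset.sum_nonneg fun i _ => mul_nonneg (hμ0 i) (mul_self_nonneg _)
  have key : ∀ s, 0 < A s s →
      A s s * tailSum (A - (A s s)⁻¹ • Matrix.vecMulVec (fun i => A i s) (A s)) (k - 1)
        ≤ A s s * T + lam1 * τ s := by
    intro s hs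
    set M : Matrix (Fin N) (Fin N) ℝ :=
      A - (A s s)⁻¹ • Matrix.vecMulVec (fun i => A i s) (A s) with hMdef
    set d : Fin N → ℝ := fun i => u i s with hddef
    set γ : Fin N → ℝ := fun i => μ i * u i s with hγdef
    set mco : Fin N → Fin N → ℝ :=
      fun p p' => (if p = p' then μ p else 0) - (A s s)⁻¹ * (γ p * γ p') with hmcodef
    set Pss : ℝ := ∑ i ∈ S₀, d i * d i with hPssdef
    set g : ℝ := ∑ i ∈ S₀, μ i * (d i * d i) with hgdef
    have hτs : τ s = ∑ i ∈ S₀ᶜ, μ i * (d i * d i) := by simp only [hτdef, hddef]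
    have hag : A s s = g + τ s := by
      rw [hdiagA s, hτs, hgdef, ← Finset.sum_add_sum_compl S₀ (fun i => μ i * (d i * d i))]
    have hMentry : ∀ l j, M l j = ∑ p, ∑ p', mco p p' * u p l * u p' j := by
      intro l j
      have hAcol : ∀ l', A l' s = ∑ i, γ i * u i l' := fun l' => by
        rw [hAe l' s]
        exact Finset.sum_congr rfl fun i _ => by simp only [hγdef]; ring
      have hMval : M l j = A l j - (A s s)⁻¹ * (A l s * A s j) := by
        rw [hMdef]
        simp [Matrix.sub_apply, Matrix.smul_apply, Matrix.vecMulVec_apply, smul_eq_mul]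
      rw [hMval]
      have hsplit : ∑ p, ∑ p', mco p p' * u p l * u p' j
          = (∑ p, ∑ p', (if p = p' then μ p else 0) * u p l * u p' j)
            - (A s s)⁻¹ * ((∑ p, γ p * u p l) * (∑ p', γ p' * u p' j)) := by
        rw [Finset.sum_mul_sum]
        rw [Finset.mul_sum, ← Finset.sum_sub_distrib]
        refine Finset.sum_congr rfl fun p _ => ?_
        rw [Finset.mul_sum, ← Finset.sum_sub_distrib]
        refine Finset.sum_congr rfl fun p' _ => ?_
        simp only [hmcodef]
        ring
      rw [hsplit]
      have hdelta : ∑ p, ∑ p', (if p = p' then μ p else 0) * u p l * u p' j = A l j := by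
        have h1 : ∀ p, ∑ p', (if p = p' then μ p else 0) * u p l * u p' j
            = μ p * u p l * u p j := by
          intro p
          have h2 : ∀ p', (if p = p' then μ p else 0) * u p l * u p' j
              = if p = p' then μ p * u p l * u p' j else 0 := by
            intro p'
            split_ifs <;> simp
          rw [Finset.sum_congr rfl fun p' _ => h2 p', Finset.sum_ite_eq, if_pos (Finset.mem_univ p)]
        rw [Finset.sum_congr rfl fun p _ => h1 p]
        exact (hAe l j).symm
      rw [hdelta, ← hAcol l, ← hAcol j]
      have : A j s = A s j := by
        rw [hAe j s, hAe s j]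
        exact Finset.sum_congr rfl fun i _ => by ring
      rw [this]
    have hMherm : M.IsHermitian := by
      refine Matrix.IsHermitian.ext fun j l => ?_
      rw [star_trivial, hMentry l j, hMentry j l]
      rw [Finset.sum_comm]
      refine Finset.sum_congr rfl fun p _ => Finset.sum_congr rfl fun p' _ => ?_
      have hmsym : mco p' p = mco p p' := by
        simp only [hmcodef]
        by_cases h : p = p'
        · subst h; ring
        · rw [if_neg h, if_neg (Ne.symm h)]; ring
      rw [hmsym]
      ring
    have hMtrace : M.trace = (∑ i, μ i) - (A s s)⁻¹ * ∑ i, γ i * γ i := by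
      have h0 : M.trace = ∑ l, M l l := rfl
      rw [h0]
      have h1 : ∀ l, M l l = A l l - (A s s)⁻¹ * (A l s * A s l) := by
        intro l
        rw [hMdef]
        simp [Matrix.sub_apply, Matrix.smul_apply, Matrix.vecMulVec_apply, smul_eq_mul]
      rw [Finset.sum_congr rfl fun l _ => h1 l]
      rw [Finset.sum_sub_distrib, ← Finset.mul_sum]
      have hA1 : (∑ l, A l l) = ∑ i, μ i := by
        rw [← htrA]
        rfl
      rw [hA1]
      congr 1
      · congr 1
        have hAcol : ∀ l', A l' s = ∑ i, γ i * u i l' := fun l' => by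
          rw [hAe l' s]
          exact Finset.sum_congr rfl fun i _ => by simp only [hγdef]; ring
        have hArow : ∀ l', A s l' = ∑ i, γ i * u i l' := fun l' => by
          rw [hAe s l']
          try exact Finset.sum_congr rfl fun i _ => by simp only [hγdef]; try ring
        have h := horth hrow Finset.univ Finset.univ γ γ
        rw [Finset.univ_inter] at h
        rw [← h]
        exact Finset.sum_congr rfl fun l _ => by rw [hAcol l, hArow l]
    have hsplitμ : (∑ i, μ i) = (∑ i ∈ S₀, μ i) + T := by
      rw [hTdef, Finset.sum_add_sum_compl]
    have hsplitγ : (∑ i, γ i * γ i) = (∑ i ∈ S₀, γ i * γ i) + ∑ i ∈ S₀ᶜ, γ i * γ i := by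
      rw [Finset.sum_add_sum_compl]
    have hγγnn : (0:ℝ) ≤ ∑ i ∈ S₀ᶜ, γ i * γ i :=
      Finset.sum_nonneg fun i _ => mul_self_nonneg _
    have hkr : k - 1 ≤ N := by omega
    have hkcast : ((k - 1 : ℕ) : ℝ) = (k : ℝ) - 1 := by
      have := hk
      push_cast [Nat.cast_sub hk]
      ring
    have hPssnn : (0:ℝ) ≤ Pss := Finset.sum_nonneg fun i _ => mul_self_nonneg _
    have hglam : g ≤ lam1 * Pss := by
      rw [hgdef, hPssdef, Finset.mul_sum]
      exact Finset.sum_le_sum fun i _ =>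
        mul_le_mul_of_nonneg_right (hμlam1 i) (mul_self_nonneg _)
    have hgnn : 0 ≤ g := Finset.sum_nonneg fun i _ =>
      mul_nonneg (hμ0 i) (mul_self_nonneg _)
    by_cases hP : 0 < Pss
    · -- main case
      set q : Fin N → Fin N → ℝ :=
        fun i i' => (if i = i' then (1:ℝ) else 0) - d i * d i' / Pss with hqdef
      have hqsym : ∀ i i', q i i' = q i' i := by
        intro i i'
        simp only [hqdef]
        by_cases h : i = i'
        · subst h; ring
        · rw [if_neg h, if_neg (Ne.symm h)]; ring
      have hformula : ∀ x : Fin N → ℝ,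
          x ⬝ᵥ (coeffM u S₀ q *ᵥ x)
            = (∑ i ∈ S₀, (∑ j, u i j * x j) * (∑ j, u i j * x j))
              - (∑ i ∈ S₀, d i * (∑ j, u i j * x j)) * (∑ i ∈ S₀, d i * (∑ j, u i j * x j)) / Pss := by
        intro x
        rw [coeffM_dotProduct]
        set w : Fin N → ℝ := fun i => ∑ j, u i j * x j with hwdef
        have hterm : ∀ i ∈ S₀, ∀ i' ∈ S₀, q i i' * w i * w i'
            = (if i = i' then (1:ℝ) else 0) * (w i * w i')
              - (d i * w i) * (d i' * w i') / Pss := by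
          intro i _ i' _
          simp only [hqdef]
          ring
        calc ∑ i ∈ S₀, ∑ i' ∈ S₀, q i i' * w i * w i'
            = ∑ i ∈ S₀, ∑ i' ∈ S₀,
                ((if i = i' then (1:ℝ) else 0) * (w i * w i')
                  - (d i * w i) * (d i' * w i') / Pss) := by
              refine Finset.sum_congr rfl fun i hi => Finset.sum_congr rfl fun i' hi' => ?_
              exact hterm i hi i' hi'
          _ = (∑ i ∈ S₀, ∑ i' ∈ S₀, (if i = i' then (1:ℝ) else 0) * (w i * w i'))
              - ∑ i ∈ S₀, ∑ i' ∈ S₀, (d i * w i) * (d i' * w i') / Pss := by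
              rw [← Finset.sum_sub_distrib]
              exact Finset.sum_congr rfl fun i _ => by rw [← Finset.sum_sub_distrib]
          _ = (∑ i ∈ S₀, w i * w i)
              - (∑ i ∈ S₀, d i * w i) * (∑ i ∈ S₀, d i * w i) / Pss := by
              congr 1
              · exact sum_delta_mul S₀ _
              · rw [Finset.sum_mul_sum]
                rw [Finset.sum_div]
                exact Finset.sum_congr rfl fun i _ => by rw [Finset.sum_div]
      have hQpsd : (coeffM u S₀ q).PosSemidef := by
        refine Matrix.PosSemidef.of_dotProduct_mulVec_nonneg (coeffM_isHermitian u S₀ q hqsym) fun x => ?_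
        rw [star_trivial, hformula x]
        set w : Fin N → ℝ := fun i => ∑ j, u i j * x j with hwdef
        have hcs : (∑ i ∈ S₀, d i * w i) * (∑ i ∈ S₀, d i * w i)
            ≤ Pss * ∑ i ∈ S₀, w i * w i := by
          have h := Finset.sum_mul_sq_le_sq_mul_sq S₀ d w
          rw [hPssdef]
          calc (∑ i ∈ S₀, d i * w i) * (∑ i ∈ S₀, d i * w i)
              = (∑ i ∈ S₀, d i * w i) ^ 2 := by ring
            _ ≤ (∑ i ∈ S₀, d i ^ 2) * ∑ i ∈ S₀, w i ^ 2 := h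
            _ = (∑ i ∈ S₀, d i * d i) * ∑ i ∈ S₀, w i * w i := by
                congr 1 <;> exact Finset.sum_congr rfl fun i _ => by ring
        rw [sub_nonneg, div_le_iff₀ hP]
        nlinarith [hcs]
      have hQ1psd : ((1 : Matrix (Fin N) (Fin N) ℝ) - coeffM u S₀ q).PosSemidef := by
        refine Matrix.PosSemidef.of_dotProduct_mulVec_nonneg (Matrix.IsHermitian.sub Matrix.isHermitian_one (coeffM_isHermitian u S₀ q hqsym))
          fun x => ?_
        rw [star_trivial]
        have hdot : x ⬝ᵥ (((1 : Matrix (Fin N) (Fin N) ℝ) - coeffM u S₀ q) *ᵥ x)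
            = (∑ j, x j * x j) - x ⬝ᵥ (coeffM u S₀ q *ᵥ x) := by
          rw [Matrix.sub_mulVec, dotProduct_sub, Matrix.one_mulVec]
          rfl
        rw [hdot, hformula x]
        set w : Fin N → ℝ := fun i => ∑ j, u i j * x j with hwdef
        have hb : ∑ i ∈ S₀, w i * w i ≤ ∑ j, x j * x j := by
          rw [← hbessel hcol x]
          exact Finset.sum_le_sum_of_subset_of_nonneg (Finset.subset_univ S₀)
            (fun i _ _ => mul_self_nonneg _)
        have hdivnn : 0 ≤ (∑ i ∈ S₀, d i * w i) * (∑ i ∈ S₀, d i * w i) / Pss :=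
          div_nonneg (mul_self_nonneg _) hPssnn
        linarith
      have htrQ : (coeffM u S₀ q).trace = ((k - 1 : ℕ) : ℝ) := by
        rw [coeffM_trace hrow, hkcast]
        have : ∀ i ∈ S₀, q i i = 1 - d i * d i / Pss := by
          intro i _
          simp only [hqdef]
          simp
        rw [Finset.sum_congr rfl this, Finset.sum_sub_distrib]
        rw [Finset.sum_const, hS₀card, ← Finset.sum_div, ← hPssdef, div_self hP.ne']
        simp
      have hkyfan := kyFan hMherm hkr hQpsd hQ1psd htrQ
      have htraceQM : (coeffM u S₀ q * M).trace
          = (∑ i ∈ S₀, μ i) - (A s s)⁻¹ * (∑ i ∈ S₀, γ i * γ i)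
            - g / Pss + (A s s)⁻¹ * (g * g) / Pss := by
        rw [coeffM_trace_mul hrow S₀ q mco M hMentry]
        have hdγ : ∑ i' ∈ S₀, d i' * γ i' = g := by
          rw [hgdef]
          exact Finset.sum_congr rfl fun i _ => by simp only [hγdef, hddef]; ring
        have hinner : ∀ i ∈ S₀, ∑ i' ∈ S₀, q i i' * mco i' i
            = (μ i - (A s s)⁻¹ * (γ i * γ i))
              - d i / Pss * (d i * μ i - (A s s)⁻¹ * g * γ i) := by
          intro i hi
          have hterm : ∀ i' ∈ S₀, q i i' * mco i' i
              = ((if i = i' then (1:ℝ) else 0) * mco i' i)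
                - (d i / Pss) * (d i' * mco i' i) := by
            intro i' _
            simp only [hqdef]
            ring
          rw [Finset.sum_congr rfl hterm, Finset.sum_sub_distrib]
          congr 1
          · have h2 : ∀ i' ∈ S₀, (if i = i' then (1:ℝ) else 0) * mco i' i
                = if i = i' then mco i' i else 0 := by
              intro i' _
              split_ifs <;> simp
            rw [Finset.sum_congr rfl h2, Finset.sum_ite_eq, if_pos hi]
            simp only [hmcodef]
            simp
          · rw [← Finset.mul_sum]
            congr 1
            have h3 : ∀ i' ∈ S₀, d i' * mco i' i
                = (if i' = i then d i' * μ i' else 0) - (A s s)⁻¹ * γ i * (d i' * γ i') := by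
              intro i' _
              simp only [hmcodef]
              split_ifs <;> ring
            rw [Finset.sum_congr rfl h3, Finset.sum_sub_distrib]
            rw [Finset.sum_ite_eq', if_pos hi]
            rw [← Finset.mul_sum, hdγ]
            ring
        rw [Finset.sum_congr rfl hinner]
        rw [Finset.sum_sub_distrib, Finset.sum_sub_distrib, ← Finset.mul_sum]
        have h4 : ∀ i ∈ S₀, d i / Pss * (d i * μ i - (A s s)⁻¹ * g * γ i)
            = μ i * (d i * d i) / Pss - (A s s)⁻¹ * g * (d i * γ i) / Pss := fun i _ => by
          ring
        rw [Finset.sum_congr rfl h4, Finset.sum_sub_distrib, ← Finset.sum_div, ← hgdef]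
        have h5 : ∑ i ∈ S₀, (A s s)⁻¹ * g * (d i * γ i) / Pss
            = (A s s)⁻¹ * (g * g) / Pss := by
          rw [← Finset.sum_div, ← Finset.mul_sum]
          have hdγ : ∑ i ∈ S₀, d i * γ i = g := by
            rw [hgdef]
            exact Finset.sum_congr rfl fun i _ => by simp only [hγdef, hddef]; ring
          rw [hdγ]
          ring
        rw [h5]
        ring
      have htails : tailSum M (k-1) ≤ M.trace - (coeffM u S₀ q * M).trace := by
        rw [tailSum]
        linarith [hkyfan]
      have hE : M.trace - (coeffM u S₀ q * M).trace
          = T - (A s s)⁻¹ * (∑ i ∈ S₀ᶜ, γ i * γ i) + g / Pss - (A s s)⁻¹ * (g * g) / Pss := by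
        rw [hMtrace, htraceQM, hsplitμ, hsplitγ]
        ring
      have hEa : A s s * (T - (A s s)⁻¹ * (∑ i ∈ S₀ᶜ, γ i * γ i) + g / Pss
            - (A s s)⁻¹ * (g * g) / Pss)
          = A s s * T - (∑ i ∈ S₀ᶜ, γ i * γ i) + g * (A s s - g) / Pss := by
        field_simp
        ring
      have hτnn' : 0 ≤ A s s - g := by
        have := hτnn s
        linarith [hag]
      have hbound : g * (A s s - g) / Pss ≤ lam1 * (A s s - g) := by
        rw [div_le_iff₀ hP]
        nlinarith [hglam, hτnn']
      have hτeq : A s s - g = τ s := by linarith [hag]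
      calc A s s * tailSum M (k-1)
          ≤ A s s * (M.trace - (coeffM u S₀ q * M).trace) :=
            mul_le_mul_of_nonneg_left htails (le_of_lt hs)
        _ = A s s * T - (∑ i ∈ S₀ᶜ, γ i * γ i) + g * (A s s - g) / Pss := by
            rw [hE]
            exact hEa
        _ ≤ A s s * T + lam1 * (A s s - g) := by linarith [hγγnn, hbound]
        _ = A s s * T + lam1 * τ s := by rw [hτeq]
    · -- degenerate case Pss = 0
      have hPss0 : Pss = 0 := le_antisymm (not_lt.mp hP) hPssnn
      have hd0 : ∀ i ∈ S₀, d i = 0 := by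
        intro i hi
        have h0 : ∑ i ∈ S₀, d i * d i = 0 := by rw [← hPssdef]; exact hPss0
        have h := (Finset.sum_eq_zero_iff_of_nonneg
          (fun i _ => mul_self_nonneg (d i))).mp h0 i hi
        exact mul_self_eq_zero.mp h
      have hg0 : g = 0 := by
        rw [hgdef]
        exact Finset.sum_eq_zero fun i hi => by rw [hd0 i hi]; ring
      have hS₀ne : S₀.Nonempty := Finset.card_pos.mp (by rw [hS₀card]; omega)
      obtain ⟨i₀, hi₀⟩ := hS₀ne
      set q : Fin N → Fin N → ℝ := fun i i' => if i = i' then (1:ℝ) else 0 with hqdef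
      set Se : Finset (Fin N) := S₀.erase i₀ with hSedef
      have hqsym : ∀ i i', q i i' = q i' i := by
        intro i i'
        simp only [hqdef]
        by_cases h : i = i'
        · subst h; rfl
        · rw [if_neg h, if_neg (Ne.symm h)]
      have hformula : ∀ x : Fin N → ℝ,
          x ⬝ᵥ (coeffM u Se q *ᵥ x)
            = ∑ i ∈ Se, (∑ j, u i j * x j) * (∑ j, u i j * x j) := by
        intro x
        rw [coeffM_dotProduct]
        have h1 : ∀ i ∈ Se, ∀ i' ∈ Se,
            q i i' * (∑ j, u i j * x j) * (∑ j, u i' j * x j)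
              = (if i = i' then (1:ℝ) else 0)
                * ((∑ j, u i j * x j) * (∑ j, u i' j * x j)) := by
          intro i _ i' _
          simp only [hqdef]
          ring
        calc ∑ i ∈ Se, ∑ i' ∈ Se, q i i' * (∑ j, u i j * x j) * (∑ j, u i' j * x j)
            = ∑ i ∈ Se, ∑ i' ∈ Se, (if i = i' then (1:ℝ) else 0)
                * ((∑ j, u i j * x j) * (∑ j, u i' j * x j)) :=
              Finset.sum_congr rfl fun i hi => Finset.sum_congr rfl fun i' hi' => h1 i hi i' hi'
          _ = ∑ i ∈ Se, (∑ j, u i j * x j) * (∑ j, u i j * x j) := sum_delta_mul Se _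
      have hQpsd : (coeffM u Se q).PosSemidef := by
        refine Matrix.PosSemidef.of_dotProduct_mulVec_nonneg (coeffM_isHermitian u Se q hqsym) fun x => ?_
        rw [star_trivial, hformula x]
        exact Finset.sum_nonneg fun i _ => mul_self_nonneg _
      have hQ1psd : ((1 : Matrix (Fin N) (Fin N) ℝ) - coeffM u Se q).PosSemidef := by
        refine Matrix.PosSemidef.of_dotProduct_mulVec_nonneg (Matrix.IsHermitian.sub Matrix.isHermitian_one (coeffM_isHermitian u Se q hqsym))
          fun x => ?_
        rw [star_trivial]
        have hdot : x ⬝ᵥ (((1 : Matrix (Fin N) (Fin N) ℝ) - coeffM u Se q) *ᵥ x)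
            = (∑ j, x j * x j) - x ⬝ᵥ (coeffM u Se q *ᵥ x) := by
          rw [Matrix.sub_mulVec, dotProduct_sub, Matrix.one_mulVec]
          rfl
        rw [hdot, hformula x]
        have hb : ∑ i ∈ Se, (∑ j, u i j * x j) * (∑ j, u i j * x j) ≤ ∑ j, x j * x j := by
          rw [← hbessel hcol x]
          exact Finset.sum_le_sum_of_subset_of_nonneg (Finset.subset_univ Se)
            (fun i _ _ => mul_self_nonneg _)
        linarith
      have htrQ : (coeffM u Se q).trace = ((k - 1 : ℕ) : ℝ) := by
        rw [coeffM_trace hrow]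
        have h1 : ∀ i ∈ Se, q i i = 1 := by
          intro i _
          simp [hqdef]
        rw [Finset.sum_congr rfl h1, Finset.sum_const, hSedef,
          Finset.card_erase_of_mem hi₀, hS₀card]
        simp
      have hkyfan := kyFan hMherm hkr hQpsd hQ1psd htrQ
      have htraceQM : (coeffM u Se q * M).trace = ∑ i ∈ Se, μ i := by
        rw [coeffM_trace_mul hrow Se q mco M hMentry]
        have h1 : ∀ i ∈ Se, ∀ i' ∈ Se, q i i' * mco i' i
            = (if i = i' then (1:ℝ) else 0) * mco i' i :=
          fun i _ i' _ => by simp only [hqdef]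
        calc ∑ i ∈ Se, ∑ i' ∈ Se, q i i' * mco i' i
            = ∑ i ∈ Se, ∑ i' ∈ Se, (if i = i' then (1:ℝ) else 0) * mco i' i :=
              Finset.sum_congr rfl fun i hi => Finset.sum_congr rfl fun i' hi' => h1 i hi i' hi'
          _ = ∑ i ∈ Se, mco i i := sum_delta_mul Se _
          _ = ∑ i ∈ Se, μ i := by
              refine Finset.sum_congr rfl fun i hi => ?_
              have hdi : u i s = 0 := by
                have := hd0 i (Finset.mem_of_mem_erase (hSedef ▸ hi))
                simpa [hddef] using this
              simp [hmcodef, hγdef, hdi]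
      have hsumSe : ∑ i ∈ Se, μ i = (∑ i ∈ S₀, μ i) - μ i₀ := by
        rw [hSedef]
        exact Finset.sum_erase_eq_sub hi₀
      have htails : tailSum M (k-1) ≤ M.trace - (coeffM u Se q * M).trace := by
        rw [tailSum]
        linarith [hkyfan]
      have hE : M.trace - (coeffM u Se q * M).trace
          = T + μ i₀ - (A s s)⁻¹ * ∑ i, γ i * γ i := by
        rw [hMtrace, htraceQM, hsumSe, hsplitμ]
        ring
      have hγγall : (0:ℝ) ≤ ∑ i, γ i * γ i :=
        Finset.sum_nonneg fun i _ => mul_self_nonneg _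
      have hainv : (0:ℝ) ≤ (A s s)⁻¹ := inv_nonneg.mpr hs.le
      have hτsa : τ s = A s s := by linarith [hag, hg0]
      calc A s s * tailSum M (k-1)
          ≤ A s s * (M.trace - (coeffM u Se q * M).trace) :=
            mul_le_mul_of_nonneg_left htails hs.le
        _ = A s s * (T + μ i₀ - (A s s)⁻¹ * ∑ i, γ i * γ i) := by rw [hE]
        _ ≤ A s s * (T + μ i₀) := by
            refine mul_le_mul_of_nonneg_left ?_ hs.le
            have := mul_nonneg hainv hγγall
            linarith
        _ = A s s * T + A s s * μ i₀ := by ring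
        _ ≤ A s s * T + lam1 * τ s := by
            rw [hτsa]
            have h := mul_le_mul_of_nonneg_left (hμlam1 i₀) hs.le
            linarith
  -- assembly
  have hsum_a : ∑ s ∈ Finset.univ.filter (fun s => 0 < A s s), A s s ≤ A.trace := by
    have h1 : A.trace = ∑ s, A s s := rfl
    rw [h1]
    exact Finset.sum_le_sum_of_subset_of_nonneg (Finset.filter_subset _ _)
      (fun i _ _ => hdiag_nn i)
  have hsum_τ : ∑ s ∈ Finset.univ.filter (fun s => 0 < A s s), τ s ≤ T := by
    rw [← hτsum]
    exact Finset.sum_le_sum_of_subset_of_nonneg (Finset.filter_subset _ _)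
      (fun i _ _ => hτnn i)
  calc ∑ s ∈ Finset.univ.filter (fun s => 0 < A s s),
        (A s s / A.trace) *
          tailSum (A - (A s s)⁻¹ • Matrix.vecMulVec (fun i => A i s) (A s)) (k - 1)
      = ∑ s ∈ Finset.univ.filter (fun s => 0 < A s s),
          (A s s * tailSum (A - (A s s)⁻¹ • Matrix.vecMulVec (fun i => A i s) (A s)) (k - 1))
            / A.trace := by
        exact Finset.sum_congr rfl fun s _ => by rw [div_mul_eq_mul_div]
    _ ≤ ∑ s ∈ Finset.univ.filter (fun s => 0 < A s s), (A s s * T + lam1 * τ s) / A.trace := by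
        refine Finset.sum_le_sum fun s hs => ?_
        have hs' : 0 < A s s := (Finset.mem_filter.mp hs).2
        exact (div_le_div_iff_of_pos_right htr).mpr (key s hs')
    _ = ((∑ s ∈ Finset.univ.filter (fun s => 0 < A s s), A s s) * T
          + lam1 * (∑ s ∈ Finset.univ.filter (fun s => 0 < A s s), τ s)) / A.trace := by
        rw [← Finset.sum_div]
        congr 1
        rw [Finset.sum_add_distrib, Finset.sum_mul, Finset.mul_sum]
    _ ≤ (A.trace * T + lam1 * T) / A.trace := by
        refine (div_le_div_iff_of_pos_right htr).mpr ?_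
        exact add_le_add (mul_le_mul_of_nonneg_right hsum_a hTnn)
          (mul_le_mul_of_nonneg_left hsum_τ hlam1nn)
    _ ≤ (1 + (sumTopEig A 1 + (sumTopEig A k - sumTopEig A (k - 1))) / A.trace) *
          tailSum A k := by
        rw [htail, ← hlam1def]
        set lamd : ℝ := sumTopEig A k - sumTopEig A (k-1) with hlamddef
        have hlamd : 0 ≤ lamd := by rw [hlamddef]; linarith
        rw [div_le_iff₀ htr]
        have hexp : (1 + (lam1 + lamd) / A.trace) * T * A.trace
            = T * A.trace + (lam1 + lamd) * T := by
          field_simp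
        rw [hexp]
        nlinarith [mul_nonneg hlamd hTnn]
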